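/- Let G be a finite simple graph, ℓ ≥ 1 an integer, and assume G is ℓ-tangle-free. If vertices i, j satisfy B^(ℓ)_{ij} − D^(ℓ)_{ij} = 1, then there exists a cycle 𝒞 of G such that d(i, 𝒞) + d(j, 𝒞) ≤ ℓ, where d(i, 𝒞) denotes the minimum graph distance from i to a vertex of 𝒞. -/

import Mathlib

/-- The `(i,j)` entry of the path expansion matrix `B^(ℓ)`: the number of self-avoiding
paths of length `ℓ` from `i` to `j`. -/
noncomputable def pathCount {V : Type*} (G : SimpleGraph V) (ℓ : ℕ) (i j : V) : ℕ :=
  Set.ncard {p : G.Walk i j | p.IsPath ∧ p.length = ℓ}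

/-- The `(i,j)` entry of the distance matrix `D^(ℓ)`: `1` if the graph distance between
`i` and `j` equals `ℓ`, and `0` otherwise. -/
noncomputable def distEntry {V : Type*} (G : SimpleGraph V) (ℓ : ℕ) (i j : V) : ℕ :=
  if G.edist i j = (ℓ : ℕ∞) then 1 else 0

/-- The distance (in `ℕ∞`) from a vertex `v` to a set `S` of vertices. -/
noncomputable def edistToSet {V : Type*} (G : SimpleGraph V) (S : Set V) (v : V) : ℕ∞ :=
  ⨅ w ∈ S, G.edist v w

/-- A graph is `ℓ`-tangle-free if, for every vertex `v`, any two cycles all of whose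
vertices lie at graph distance at most `ℓ` from `v` have the same edge set. -/
def TangleFree {V : Type*} [DecidableEq V] (G : SimpleGraph V) (ℓ : ℕ) : Prop :=
  ∀ (v a b : V) (c₁ : G.Walk a a) (c₂ : G.Walk b b),
    c₁.IsCycle → c₂.IsCycle →
    (∀ w ∈ c₁.support, G.edist v w ≤ (ℓ : ℕ∞)) →
    (∀ w ∈ c₂.support, G.edist v w ≤ (ℓ : ℕ∞)) →
    c₁.edges.toFinset = c₂.edges.toFinset

open SimpleGraph
private lemma exists_edge_of_mem_support' {V : Type*} {G : SimpleGraph V} {u v w : V}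
    (p : G.Walk u v) (hne : p.length ≠ 0) (hw : w ∈ p.support) : ∃ e ∈ p.edges, w ∈ e := by
  induction p with
  | nil => simp at hne
  | @cons a b c h p ih =>
    cases p with
    | nil =>
      simp only [Walk.support_cons, Walk.support_nil, List.mem_cons, List.mem_singleton] at hw
      refine ⟨s(a, b), by simp, ?_⟩
      rcases hw with rfl | rfl | h'
      · simp
      · simp
      · simp at h'
    | @cons b' c' d h' p' =>
      rw [Walk.support_cons] at hw
      rcases List.mem_cons.mp hw with rfl | hw'
      · exact ⟨s(w, b), by simp, by simp⟩
      · obtain ⟨e, he, hwe⟩ := ih (by simp) hw'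
        refine ⟨e, ?_, hwe⟩
        rw [Walk.edges_cons]
        exact List.mem_cons_of_mem _ he

private lemma walk_edist_bound' {V : Type*} {G : SimpleGraph V} [DecidableEq V] {i j w : V}
    (r : G.Walk i j) (hw : w ∈ r.support) :
    G.edist i w + G.edist w j ≤ (r.length : ℕ∞) := by
  have h1 : G.edist i w ≤ ((r.takeUntil w hw).length : ℕ∞) := SimpleGraph.edist_le _
  have h2 : G.edist w j ≤ ((r.dropUntil w hw).length : ℕ∞) := SimpleGraph.edist_le _
  have h3 : (r.takeUntil w hw).length + (r.dropUntil w hw).length = r.length := by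
    rw [← Walk.length_append, Walk.take_spec]
  calc G.edist i w + G.edist w j
      ≤ ((r.takeUntil w hw).length : ℕ∞) + ((r.dropUntil w hw).length : ℕ∞) := add_le_add h1 h2
    _ = (((r.takeUntil w hw).length + (r.dropUntil w hw).length : ℕ) : ℕ∞) := by
        rw [Nat.cast_add]
    _ = (r.length : ℕ∞) := by rw [h3]

private lemma key' {V : Type*} [DecidableEq V] {G : SimpleGraph V} {ℓ : ℕ} {i j : V}
    (p q : G.Walk i j) (hp : p.IsPath) (hq : q.IsPath) (hpq : p ≠ q)
    (hpl : p.length ≤ ℓ) (hql : q.length ≤ ℓ) :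
    ∃ (a : V) (c : G.Walk a a), c.IsCycle ∧
      edistToSet G {w | w ∈ c.support} i + edistToSet G {w | w ∈ c.support} j ≤ (ℓ : ℕ∞) := by
  classical
  set K : G.Subgraph := p.toSubgraph ⊔ q.toSubgraph with hK
  set H : SimpleGraph V := K.spanningCoe with hH
  have hHG : H ≤ G := K.spanningCoe_le
  -- membership of edges
  have hKedge : ∀ e, e ∈ K.edgeSet ↔ (e ∈ p.edges ∨ e ∈ q.edges) := by
    intro e
    rw [hK, SimpleGraph.Subgraph.edgeSet_sup]
    simp [p.mem_edges_toSubgraph, q.mem_edges_toSubgraph]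
  have hHedge : ∀ e, e ∈ H.edgeSet ↔ e ∈ K.edgeSet := by
    intro e
    induction e with
    | _ x y => rfl
  have hpe : ∀ e ∈ p.edges, e ∈ H.edgeSet := fun e he => (hHedge e).2 ((hKedge e).2 (Or.inl he))
  have hqe : ∀ e ∈ q.edges, e ∈ H.edgeSet := fun e he => (hHedge e).2 ((hKedge e).2 (Or.inr he))
  -- transfer paths into H
  set p' : H.Walk i j := p.transfer H hpe with hp'def
  set q' : H.Walk i j := q.transfer H hqe with hq'def
  have hp' : p'.IsPath := by
    rw [Walk.isPath_def, hp'def, Walk.support_transfer]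
    exact hp.support_nodup
  have hq' : q'.IsPath := by
    rw [Walk.isPath_def, hq'def, Walk.support_transfer]
    exact hq.support_nodup
  have hback : ∀ (r : G.Walk i j) (hr : ∀ e ∈ r.edges, e ∈ H.edgeSet),
      ((r.transfer H hr).transfer G
        (fun e he => (SimpleGraph.edgeSet_mono hHG) ((r.transfer H hr).edges_subset_edgeSet he)))
      = r := by
    intro r hr
    rw [Walk.transfer_transfer]
    exact r.transfer_self
  have hp'q' : p' ≠ q' := by
    intro hcontra
    have hpqb := congrArg (fun r : H.Walk i j =>
      r.transfer G (fun e he => (SimpleGraph.edgeSet_mono hHG) (r.edges_subset_edgeSet he)))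
      hcontra
    simp only [hp'def, hq'def] at hpqb
    rw [hback p hpe, hback q hqe] at hpqb
    exact hpq hpqb
  -- H has a cycle
  have hnotac : ¬ H.IsAcyclic := by
    intro hac
    exact hp'q' (Subtype.mk_eq_mk.mp (hac.path_unique ⟨p', hp'⟩ ⟨q', hq'⟩))
  rw [SimpleGraph.IsAcyclic] at hnotac
  push_neg at hnotac
  obtain ⟨a, c, hc⟩ := hnotac
  -- every vertex of c is within the bound
  have hbound : ∀ w ∈ c.support, G.edist i w + G.edist w j ≤ (ℓ : ℕ∞) := by
    intro w hw
    have hlen : c.length ≠ 0 := by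
      have := hc.three_le_length
      omega
    obtain ⟨e, hec, hwe⟩ := exists_edge_of_mem_support' c hlen hw
    have heH : e ∈ H.edgeSet := c.edges_subset_edgeSet hec
    have hepq : e ∈ p.edges ∨ e ∈ q.edges := (hKedge e).1 ((hHedge e).1 heH)
    have hwsup : w ∈ p.support ∨ w ∈ q.support := by
      induction e with
      | _ x y =>
        rcases Sym2.mem_iff.mp hwe with rfl | rfl
        · rcases hepq with h' | h'
          · exact Or.inl (p.fst_mem_support_of_mem_edges h')
          · exact Or.inr (q.fst_mem_support_of_mem_edges h')
        · rcases hepq with h' | h'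
          · exact Or.inl (p.snd_mem_support_of_mem_edges h')
          · exact Or.inr (q.snd_mem_support_of_mem_edges h')
    rcases hwsup with hws | hws
    · exact le_trans (walk_edist_bound' p hws) (Nat.cast_le.mpr hpl)
    · exact le_trans (walk_edist_bound' q hws) (Nat.cast_le.mpr hql)
  -- map cycle to G
  refine ⟨a, c.mapLe hHG, hc.mapLe hHG, ?_⟩
  have hsup : (c.mapLe hHG).support = c.support := by
    have hid : ⇑(SimpleGraph.Hom.ofLE hHG) = id := rfl
    rw [Walk.mapLe, Walk.support_map, hid, List.map_id]
  have haS : a ∈ {w | w ∈ (c.mapLe hHG).support} := by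
    rw [Set.mem_setOf_eq, hsup]
    exact c.start_mem_support
  have h1 : edistToSet G {w | w ∈ (c.mapLe hHG).support} i ≤ G.edist i a := by
    exact iInf₂_le a haS
  have h2 : edistToSet G {w | w ∈ (c.mapLe hHG).support} j ≤ G.edist j a := by
    exact iInf₂_le a haS
  calc edistToSet G {w | w ∈ (c.mapLe hHG).support} i
        + edistToSet G {w | w ∈ (c.mapLe hHG).support} j
      ≤ G.edist i a + G.edist j a := add_le_add h1 h2
    _ = G.edist i a + G.edist a j := by rw [SimpleGraph.edist_comm (u := j)]
    _ ≤ (ℓ : ℕ∞) := hbound a c.start_mem_support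


/-- In an `ℓ`-tangle-free graph, if `B^(ℓ)_{ij} - D^(ℓ)_{ij} = 1` then there is a cycle
`𝒞` with `d(i, 𝒞) + d(j, 𝒞) ≤ ℓ`. -/
theorem cycle_close_of_pathCount_eq_distEntry_add_one
    {V : Type*} [Fintype V] [DecidableEq V]
    (G : SimpleGraph V) (ℓ : ℕ) (hℓ : 1 ≤ ℓ) (htf : TangleFree G ℓ) (i j : V)
    (h : pathCount G ℓ i j = distEntry G ℓ i j + 1) :
    ∃ (a : V) (c : G.Walk a a), c.IsCycle ∧
      edistToSet G {w | w ∈ c.support} i + edistToSet G {w | w ∈ c.support} j ≤ (ℓ : ℕ∞) := by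
  rw [pathCount, distEntry] at h
  by_cases hd : G.edist i j = (ℓ : ℕ∞)
  · rw [if_pos hd] at h
    obtain ⟨p, q, hpq, hset⟩ := Set.ncard_eq_two.mp h
    have hpmem : p ∈ {p : G.Walk i j | p.IsPath ∧ p.length = ℓ} := by rw [hset]; simp
    have hqmem : q ∈ {p : G.Walk i j | p.IsPath ∧ p.length = ℓ} := by rw [hset]; simp
    exact key' p q hpmem.1 hqmem.1 hpq (le_of_eq hpmem.2) (le_of_eq hqmem.2)
  · rw [if_neg hd] at h
    obtain ⟨p, hset⟩ := Set.ncard_eq_one.mp h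
    have hpmem : p ∈ {p : G.Walk i j | p.IsPath ∧ p.length = ℓ} := by rw [hset]; simp
    have hle : G.edist i j ≤ (ℓ : ℕ∞) := by
      have := SimpleGraph.edist_le p
      rwa [hpmem.2] at this
    have hlt : G.edist i j < (ℓ : ℕ∞) := lt_of_le_of_ne hle hd
    have hne : G.edist i j ≠ ⊤ := by
      intro htop
      rw [htop] at hlt
      exact (not_top_lt hlt)
    obtain ⟨q0, hq0⟩ := SimpleGraph.exists_walk_of_edist_ne_top hne
    have hq0lt : (q0.length : ℕ∞) < (ℓ : ℕ∞) := by rw [hq0]; exact hlt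
    have hq0lt' : q0.length < ℓ := by exact_mod_cast hq0lt
    have hqlen : q0.bypass.length < ℓ := lt_of_le_of_lt (Walk.length_bypass_le q0) hq0lt'
    have hpq : p ≠ q0.bypass := by
      intro hcontra
      rw [← hcontra, hpmem.2] at hqlen
      omega
    exact key' p q0.bypass hpmem.1 (Walk.bypass_isPath q0) hpq (le_of_eq hpmem.2)
      (le_of_lt hqlen)
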